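/- arXiv:2604.21368 — 2 statements merged into one kernel-verified Lean document; each statement's English description precedes it below -/
import Mathlib

section
/- Let f: ℝ^d → ℝ be differentiable with L-Lipschitz gradient, and let u ∈ {−1,1}^d be a uniformly random Rademacher vector. Define the two-point estimator ĝ = (1/μ)[f(x + μu) − f(x)] u for μ > 0. Then ‖E_u[ĝ] − ∇f(x)‖ ≤ μ L d^{3/2} / 2. -/
open Finset

local notation "⟪" a ", " b "⟫" => @inner ℝ _ _ a b

lemma descent_lemma {E : Type*} [NormedAddCommGroup E] [InnerProductSpace ℝ E]
    [CompleteSpace E]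
    (f : E → ℝ) (L : ℝ) (hf : Differentiable ℝ f)
    (hL : ∀ x y, ‖gradient f x - gradient f y‖ ≤ L * ‖x - y‖)
    (x v : E) :
    |f (x + v) - f x - ⟪gradient f x, v⟫| ≤ L / 2 * ‖v‖ ^ 2 := by
  set G := gradient f x with hG
  have key : ∀ t : ℝ, HasDerivAt (fun t : ℝ => f (x + t • v))
      ⟪gradient f (x + t • v), v⟫ t := by
    intro t
    have h1 : HasDerivAt (fun t : ℝ => x + t • v) v t := by
      simpa using ((hasDerivAt_id t).smul_const v).const_add x
    have h2 : HasFDerivAt f (InnerProductSpace.toDual ℝ E (gradient f (x + t • v)))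
        (x + t • v) := hasGradientAt_iff_hasFDerivAt.mp (hf _).hasGradientAt
    simpa [Function.comp_def] using h2.comp_hasDerivAt t h1
  set ψ : ℝ → ℝ := fun t => f (x + t • v) - t * ⟪G, v⟫ - f x with hψdef
  have hψ : ∀ t : ℝ, HasDerivAt ψ ⟪gradient f (x + t • v) - G, v⟫ t := by
    intro t
    have := ((key t).sub ((hasDerivAt_id t).mul_const ⟪G, v⟫)).sub_const (f x)
    rw [hψdef]
    simpa [inner_sub_left] using this
  have hB : ∀ t : ℝ, HasDerivAt (fun t : ℝ => L / 2 * ‖v‖ ^ 2 * t ^ 2)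
      (L / 2 * ‖v‖ ^ 2 * (2 * t)) t := by
    intro t
    have h := HasDerivAt.const_mul (L / 2 * ‖v‖ ^ 2) (hasDerivAt_pow 2 t)
    exact h.congr_deriv (by norm_num)
  have bound : ∀ t ∈ Set.Ico (0 : ℝ) 1,
      ‖⟪gradient f (x + t • v) - G, v⟫‖ ≤ L / 2 * ‖v‖ ^ 2 * (2 * t) := by
    intro t ht
    calc ‖⟪gradient f (x + t • v) - G, v⟫‖
        ≤ ‖gradient f (x + t • v) - G‖ * ‖v‖ := by
          simpa using abs_real_inner_le_norm (gradient f (x + t • v) - G) v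
      _ ≤ (L * ‖t • v‖) * ‖v‖ := by
          apply mul_le_mul_of_nonneg_right _ (norm_nonneg v)
          simpa using hL (x + t • v) x
      _ = L / 2 * ‖v‖ ^ 2 * (2 * t) := by
          rw [norm_smul, Real.norm_eq_abs, abs_of_nonneg ht.1]; ring
  have := image_norm_le_of_norm_deriv_right_le_deriv_boundary
    (f := ψ) (a := 0) (b := 1)
    (fun t _ => (hψ t).continuousAt.continuousWithinAt)
    (fun t ht => (hψ t).hasDerivWithinAt)
    (by simp [hψdef]) hB bound (Set.right_mem_Icc.mpr zero_le_one)
  simpa [hψdef, Real.norm_eq_abs, abs_sub_comm, sub_sub, add_comm] using this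

/-- Bias bound for the two-point Rademacher zeroth-order gradient estimator:
`‖E_u[ĝ] − ∇f(x)‖ ≤ μ L d^{3/2} / 2`. The expectation over the uniform
distribution on `{-1,1}^d` is written as an average over sign patterns. -/
theorem zo_estimator_bias (d : ℕ) (f : EuclideanSpace ℝ (Fin d) → ℝ)
    (L : ℝ) (hf : Differentiable ℝ f)
    (hL : ∀ x y, ‖gradient f x - gradient f y‖ ≤ L * ‖x - y‖)
    (μ : ℝ) (hμ : 0 < μ) (x : EuclideanSpace ℝ (Fin d))
    (u : (Fin d → Bool) → EuclideanSpace ℝ (Fin d))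
    (hu : ∀ s i, u s i = if s i then 1 else -1)
    (g : (Fin d → Bool) → EuclideanSpace ℝ (Fin d))
    (hg : ∀ s, g s = (μ⁻¹ * (f (x + μ • u s) - f x)) • u s) :
    ‖((2 : ℝ) ^ d)⁻¹ • (∑ s : Fin d → Bool, g s) - gradient f x‖ ≤
      μ * L * (d : ℝ) ^ ((3 : ℝ) / 2) / 2 := by
  classical
  have husq : ∀ (s : Fin d → Bool) i, u s i * u s i = 1 := by
    intro s i; rw [hu]; cases s i <;> norm_num
  have hnorm : ∀ s, ‖u s‖ = Real.sqrt d := by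
    intro s
    rw [EuclideanSpace.norm_eq]
    congr 1
    have h1 : ∀ i, u s i ^ 2 = 1 := by intro i; rw [hu]; cases s i <;> norm_num
    simp [Real.norm_eq_abs, sq_abs, h1]
  have hcard : (Finset.univ : Finset (Fin d → Bool)).card = 2 ^ d := by
    simp [Finset.card_univ, Fintype.card_fun]
  have horth : ∀ i j : Fin d,
      ∑ s : Fin d → Bool, u s i * u s j = if i = j then (2:ℝ)^d else 0 := by
    intro i j
    by_cases hij : i = j
    · subst hij
      rw [if_pos rfl, Finset.sum_congr rfl fun s _ => husq s i]
      simp [hcard]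
    · rw [if_neg hij]
      have hinv : Function.Involutive
          (fun s : Fin d → Bool => Function.update s i (!s i)) := by
        intro s; funext k
        by_cases hk : k = i
        · subst hk; simp
        · simp [Function.update_of_ne hk]
      have hflip : ∀ s : Fin d → Bool,
          u (Function.update s i (!s i)) i * u (Function.update s i (!s i)) j
            = -(u s i * u s j) := by
        intro s
        rw [hu, hu, hu, hu, Function.update_self,
          Function.update_of_ne (fun h => hij h.symm)]
        cases s i <;> cases s j <;> norm_num
      set S := ∑ s : Fin d → Bool, u s i * u s j with hS
      have h1 : S = -S := by
        calc S = ∑ s : Fin d → Bool,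
              u (hinv.toPerm _ s) i * u (hinv.toPerm _ s) j :=
            (Equiv.sum_comp (hinv.toPerm _) (fun s => u s i * u s j)).symm
          _ = ∑ s : Fin d → Bool, -(u s i * u s j) :=
            Finset.sum_congr rfl fun s _ => by
              simpa [Function.Involutive.coe_toPerm] using hflip s
          _ = -S := by rw [Finset.sum_neg_distrib]
      linarith
  set G := gradient f x with hG
  have hsum_apply : ∀ (w : (Fin d → Bool) → EuclideanSpace ℝ (Fin d)) (i : Fin d),
      (∑ s, w s) i = ∑ s, w s i := fun w i => by rw [WithLp.ofLp_sum, Finset.sum_apply]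
  have hinner : ∀ (z : EuclideanSpace ℝ (Fin d)) s,
      (⟪z, u s⟫ : ℝ) = ∑ j, z j * u s j := by
    intro z s
    simp [PiLp.inner_apply, RCLike.inner_apply, conj_trivial]
    exact Finset.sum_congr rfl fun _ _ => mul_comm _ _
  have keyid : ∑ s : Fin d → Bool, (⟪G, u s⟫ : ℝ) • u s = ((2:ℝ)^d) • G := by
    ext i
    rw [hsum_apply, PiLp.smul_apply]
    have h1 : ∀ s : Fin d → Bool,
        ((⟪G, u s⟫ : ℝ) • u s) i = ∑ j, G j * u s j * u s i := by
      intro s; rw [PiLp.smul_apply, smul_eq_mul, hinner, Finset.sum_mul]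
    rw [Finset.sum_congr rfl fun s _ => h1 s, Finset.sum_comm]
    have h2 : ∀ j : Fin d, ∑ s : Fin d → Bool, G j * u s j * u s i
        = if j = i then (2:ℝ)^d * G i else 0 := by
      intro j
      have : ∑ s : Fin d → Bool, G j * u s j * u s i
          = G j * ∑ s : Fin d → Bool, u s j * u s i := by
        rw [Finset.mul_sum]
        exact Finset.sum_congr rfl fun s _ => by ring
      rw [this, horth j i]
      by_cases h : j = i
      · subst h; simp; ring
      · simp [h]
    rw [Finset.sum_congr rfl fun j _ => h2 j]
    simp [smul_eq_mul]
  have hdecomp : ((2:ℝ)^d)⁻¹ • (∑ s : Fin d → Bool, g s) - G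
      = ((2:ℝ)^d)⁻¹ • ∑ s : Fin d → Bool, (g s - (⟪G, u s⟫ : ℝ) • u s) := by
    rw [Finset.sum_sub_distrib, smul_sub, keyid, smul_smul,
      inv_mul_cancel₀ (by positivity), one_smul]
  have hterm : ∀ s, ‖g s - (⟪G, u s⟫ : ℝ) • u s‖ ≤ (μ * L * d / 2) * Real.sqrt d := by
    intro s
    rw [hg, ← sub_smul, norm_smul, hnorm, Real.norm_eq_abs]
    apply mul_le_mul_of_nonneg_right _ (Real.sqrt_nonneg _)
    have hdesc := descent_lemma f L hf hL x (μ • u s)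
    have hv : ‖μ • u s‖ = μ * Real.sqrt d := by
      rw [norm_smul, hnorm, Real.norm_eq_abs, abs_of_pos hμ]
    have hinn : (⟪G, μ • u s⟫ : ℝ) = μ * ⟪G, u s⟫ := real_inner_smul_right G (u s) μ
    rw [hv, hinn] at hdesc
    have heq : μ⁻¹ * (f (x + μ • u s) - f x) - ⟪G, u s⟫
        = μ⁻¹ * (f (x + μ • u s) - f x - μ * ⟪G, u s⟫) := by
      field_simp
    rw [heq, abs_mul, abs_of_pos (inv_pos.mpr hμ)]
    have hsq : Real.sqrt d ^ 2 = (d:ℝ) := Real.sq_sqrt (by positivity)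
    calc μ⁻¹ * |f (x + μ • u s) - f x - μ * ⟪G, u s⟫|
        ≤ μ⁻¹ * (L / 2 * (μ * Real.sqrt d) ^ 2) :=
          mul_le_mul_of_nonneg_left hdesc (by positivity)
      _ = μ * L * d / 2 := by rw [mul_pow, hsq]; field_simp
  have hd32 : (d:ℝ) ^ ((3:ℝ)/2) = (d:ℝ) * Real.sqrt d := by
    rcases Nat.eq_zero_or_pos d with h | h
    · subst h; norm_num [Real.zero_rpow]
    · have hd : (0:ℝ) < d := by exact_mod_cast h
      rw [show (3:ℝ)/2 = 1 + 1/2 by norm_num, Real.rpow_add hd, Real.rpow_one,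
        Real.sqrt_eq_rpow]
  calc ‖((2 : ℝ) ^ d)⁻¹ • (∑ s : Fin d → Bool, g s) - G‖
      = ‖((2:ℝ)^d)⁻¹ • ∑ s : Fin d → Bool, (g s - (⟪G, u s⟫ : ℝ) • u s)‖ := by
        rw [hdecomp]
    _ ≤ ((2:ℝ)^d)⁻¹ * ∑ s : Fin d → Bool, ‖g s - (⟪G, u s⟫ : ℝ) • u s‖ := by
        rw [norm_smul, Real.norm_eq_abs, abs_of_pos (by positivity)]
        exact mul_le_mul_of_nonneg_left (norm_sum_le _ _) (by positivity)
    _ ≤ ((2:ℝ)^d)⁻¹ * ((2:ℝ)^d * ((μ * L * d / 2) * Real.sqrt d)) := by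
        apply mul_le_mul_of_nonneg_left _ (by positivity)
        calc ∑ s : Fin d → Bool, ‖g s - (⟪G, u s⟫ : ℝ) • u s‖
            ≤ (Finset.univ : Finset (Fin d → Bool)).card •
                ((μ * L * d / 2) * Real.sqrt d) :=
              Finset.sum_le_card_nsmul _ _ _ fun s _ => hterm s
          _ = (2:ℝ)^d * ((μ * L * d / 2) * Real.sqrt d) := by
              rw [hcard, nsmul_eq_mul]; push_cast; ring
    _ = μ * L * (d : ℝ) ^ ((3:ℝ)/2) / 2 := by
        rw [hd32, inv_mul_cancel_left₀ (by positivity : ((2:ℝ)^d) ≠ 0)]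
        ring
end

section
/- Let f: ℝ^d → ℝ be L-smooth and u ∈ {−1,1}^d be a uniformly random Rademacher vector. The two-point estimator ĝ = (1/μ)[f(x + μu) − f(x)] u satisfies E_u[‖ĝ‖²] ≤ 2d ‖∇f(x)‖² + μ² L² d³ / 2. -/
open Finset

open intervalIntegral

local notation "⟪" a ", " b "⟫" => @inner ℝ _ _ a b

-- sum over Rademacher of product of two coordinates
lemma rad_sum (d : ℕ) (i j : Fin d) :
    ∑ s : Fin d → Bool, ((if s i then (1:ℝ) else -1) * (if s j then (1:ℝ) else -1))
      = if i = j then (2:ℝ)^d else 0 := by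
  classical
  by_cases hij : i = j
  · subst hij
    simp only [if_pos rfl]
    have : ∀ s : Fin d → Bool, ((if s i then (1:ℝ) else -1) * (if s i then (1:ℝ) else -1)) = 1 := by
      intro s; by_cases h : s i <;> simp [h]
    rw [Finset.sum_congr rfl (fun s _ => this s)]
    simp [Finset.card_univ]
  · rw [if_neg hij]
    refine Finset.sum_ninvolution (fun s => Function.update s i (! s i)) ?_ ?_ (fun _ => Finset.mem_univ _) ?_
    · intro s
      have h1 : Function.update s i (! s i) i = ! s i := Function.update_self _ _ _
      have h2 : Function.update s i (! s i) j = s j := Function.update_of_ne (Ne.symm hij) _ _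
      simp only [h1, h2]
      by_cases h : s i <;> by_cases h' : s j <;> simp [h, h'] 
    · intro s hs
      intro hcon
      have := congrFun hcon i
      simp only [Function.update_self] at this
      exact (Bool.not_ne_self (s i)) this
    · intro s
      funext k
      by_cases hk : k = i
      · subst hk; simp [Function.update_self]
      · simp [Function.update_of_ne hk]

lemma sum_inner_sq (d : ℕ) (a : Fin d → ℝ) :
    ∑ s : Fin d → Bool, (∑ i, a i * (if s i then (1:ℝ) else -1))^2
      = 2^d * ∑ i, (a i)^2 := by
  classical
  have expand : ∀ s : Fin d → Bool, (∑ i, a i * (if s i then (1:ℝ) else -1))^2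
      = ∑ i, ∑ j, (a i * (if s i then (1:ℝ) else -1)) * (a j * (if s j then (1:ℝ) else -1)) := by
    intro s; rw [sq, Finset.sum_mul_sum]
  rw [Finset.sum_congr rfl (fun s _ => expand s), Finset.sum_comm]
  have : ∀ i : Fin d, ∑ s : Fin d → Bool, ∑ j,
      (a i * (if s i then (1:ℝ) else -1)) * (a j * (if s j then (1:ℝ) else -1))
      = ∑ j, a i * a j * ∑ s : Fin d → Bool, ((if s i then (1:ℝ) else -1) * (if s j then (1:ℝ) else -1)) := by
    intro i
    rw [Finset.sum_comm]
    refine Finset.sum_congr rfl fun j _ => ?_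
    rw [Finset.mul_sum]
    exact Finset.sum_congr rfl fun s _ => by ring
  rw [Finset.sum_congr rfl (fun i _ => this i)]
  have : ∀ i : Fin d, ∑ j, a i * a j *
      (∑ s : Fin d → Bool, ((if s i then (1:ℝ) else -1) * (if s j then (1:ℝ) else -1)))
      = 2^d * (a i)^2 := by
    intro i
    rw [Finset.sum_congr rfl (fun j _ => by rw [rad_sum d i j])]
    simp only [mul_ite, mul_zero]
    rw [Finset.sum_ite_eq univ i (fun j => a i * a j * 2^d)]
    simp [sq]; ring
  rw [Finset.sum_congr rfl (fun i _ => this i), ← Finset.mul_sum]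

-- descent lemma
lemma descent {E : Type*} [NormedAddCommGroup E] [InnerProductSpace ℝ E] [CompleteSpace E]
    (f : E → ℝ) (L : ℝ) (hf : Differentiable ℝ f)
    (hL : ∀ x y, ‖gradient f x - gradient f y‖ ≤ L * ‖x - y‖)
    (x h : E) : |f (x + h) - f x - ⟪gradient f x, h⟫| ≤ L / 2 * ‖h‖ ^ 2 := by
  have gradlip : LipschitzWith ⟨|L|, abs_nonneg L⟩ (fun y => gradient f y) := by
    refine LipschitzWith.of_dist_le_mul fun y z => ?_
    rw [dist_eq_norm, dist_eq_norm]
    calc ‖gradient f y - gradient f z‖ ≤ L * ‖y - z‖ := hL y z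
    _ ≤ |L| * ‖y - z‖ := by
        exact mul_le_mul_of_nonneg_right (le_abs_self L) (norm_nonneg _)
  have gradcont : Continuous fun y => gradient f y := gradlip.continuous
  set φ' : ℝ → ℝ := fun t => ⟪gradient f (x + t • h), h⟫ with hφ'
  have hderiv : ∀ t : ℝ, HasDerivAt (fun t : ℝ => f (x + t • h)) (φ' t) t := by
    intro t
    have h1 : HasDerivAt (fun t : ℝ => x + t • h) h t := by
      simpa using ((hasDerivAt_id t).smul_const h).const_add x
    have h2 := ((hf (x + t • h)).hasGradientAt.hasFDerivAt).comp_hasDerivAt t h1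
    have h3 : HasDerivAt (fun t : ℝ => f (x + t • h)) (InnerProductSpace.toDual ℝ E (gradient f (x + t • h)) h) t := h2
    simpa [hφ'] using h3
  have hcont : Continuous φ' := by
    apply Continuous.inner
    · exact gradcont.comp (continuous_const.add (continuous_id.smul continuous_const))
    · exact continuous_const
  have hint : IntervalIntegrable φ' MeasureTheory.volume 0 1 :=
    hcont.intervalIntegrable 0 1
  have key : ∫ t in (0:ℝ)..1, φ' t = f (x + h) - f x := by
    have := intervalIntegral.integral_eq_sub_of_hasDerivAt
      (f := fun t : ℝ => f (x + t • h)) (f' := φ') (fun t _ => hderiv t) hint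
    simpa using this
  have const_int : ∫ t in (0:ℝ)..1, (⟪gradient f x, h⟫ : ℝ) = ⟪gradient f x, h⟫ := by simp
  have diff_eq : f (x + h) - f x - ⟪gradient f x, h⟫
      = ∫ t in (0:ℝ)..1, (φ' t - ⟪gradient f x, h⟫) := by
    rw [intervalIntegral.integral_sub hint (intervalIntegrable_const), key, const_int]
  rw [diff_eq]
  have bound : ∀ t ∈ Set.Icc (0:ℝ) 1, |φ' t - ⟪gradient f x, h⟫| ≤ L * ‖h‖^2 * t := by
    intro t ht
    have : φ' t - ⟪gradient f x, h⟫ = ⟪gradient f (x + t • h) - gradient f x, h⟫ := by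
      rw [inner_sub_left]
    rw [this]
    calc |⟪gradient f (x + t • h) - gradient f x, h⟫|
        ≤ ‖gradient f (x + t • h) - gradient f x‖ * ‖h‖ := abs_real_inner_le_norm _ _
      _ ≤ (L * ‖(x + t • h) - x‖) * ‖h‖ :=
          mul_le_mul_of_nonneg_right (hL _ _) (norm_nonneg _)
      _ = L * ‖h‖^2 * t := by
          rw [add_sub_cancel_left, norm_smul, Real.norm_eq_abs, abs_of_nonneg ht.1]
          ring
  have hbint : IntervalIntegrable (fun t => L * ‖h‖^2 * t) MeasureTheory.volume 0 1 :=
    (continuous_const.mul continuous_id).intervalIntegrable 0 1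
  have hval : ∫ t in (0:ℝ)..1, L * ‖h‖^2 * t = L / 2 * ‖h‖ ^ 2 := by
    rw [intervalIntegral.integral_const_mul, integral_id]
    ring
  calc |∫ t in (0:ℝ)..1, (φ' t - ⟪gradient f x, h⟫)|
      ≤ |∫ t in (0:ℝ)..1, L * ‖h‖^2 * t| := by
        rw [← Real.norm_eq_abs (∫ t in (0:ℝ)..1, (φ' t - ⟪gradient f x, h⟫))]
        refine le_trans (intervalIntegral.norm_integral_le_of_norm_le zero_le_one ?_ hbint) (le_abs_self _)
        filter_upwards with t ht
        have ht' : t ∈ Set.Icc (0:ℝ) 1 := by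
          exact ⟨le_of_lt ht.1, ht.2⟩
        exact bound t ht'
    _ = L / 2 * ‖h‖ ^ 2 := by
        rw [hval]
        have hnn : (0:ℝ) ≤ L / 2 * ‖h‖ ^ 2 := by
          rcases eq_or_ne h 0 with rfl | hh
          · simp
          · have hLnn : 0 ≤ L := by
              have := hL (x + h) x
              simp only [add_sub_cancel_left] at this
              have h1 : (0:ℝ) ≤ L * ‖h‖ := le_trans (norm_nonneg _) this
              exact nonneg_of_mul_nonneg_right (by linarith [mul_comm L ‖h‖] : (0:ℝ) ≤ ‖h‖ * L) (norm_pos_iff.mpr hh)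
            positivity
        exact abs_of_nonneg hnn



/-- Second-moment bound for the two-point Rademacher zeroth-order estimator:
`E_u[‖ĝ‖²] ≤ 2d‖∇f(x)‖² + μ²L²d³/2`. -/
theorem zo_estimator_second_moment (d : ℕ) (f : EuclideanSpace ℝ (Fin d) → ℝ)
    (L : ℝ) (hf : Differentiable ℝ f)
    (hL : ∀ x y, ‖gradient f x - gradient f y‖ ≤ L * ‖x - y‖)
    (μ : ℝ) (hμ : 0 < μ) (x : EuclideanSpace ℝ (Fin d))
    (u : (Fin d → Bool) → EuclideanSpace ℝ (Fin d))
    (hu : ∀ s i, u s i = if s i then 1 else -1)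
    (g : (Fin d → Bool) → EuclideanSpace ℝ (Fin d))
    (hg : ∀ s, g s = (μ⁻¹ * (f (x + μ • u s) - f x)) • u s) :
    ((2 : ℝ) ^ d)⁻¹ * (∑ s : Fin d → Bool, ‖g s‖ ^ 2) ≤
      2 * d * ‖gradient f x‖ ^ 2 + μ ^ 2 * L ^ 2 * (d : ℝ) ^ 3 / 2 := by
  classical
  set G := gradient f x with hG
  have hunorm : ∀ s, ‖u s‖ ^ 2 = (d : ℝ) := by
    intro s
    rw [← real_inner_self_eq_norm_sq]
    rw [PiLp.inner_apply]
    have : ∀ i : Fin d, (⟪u s i, u s i⟫ : ℝ) = 1 := by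
      intro i
      rw [RCLike.inner_apply, conj_trivial, hu s i]
      by_cases h : s i <;> simp [h]
    rw [Finset.sum_congr rfl (fun i _ => this i)]
    simp
  have hinner : ∀ s, (⟪G, u s⟫ : ℝ) = ∑ i, G i * (if s i then (1:ℝ) else -1) := by
    intro s
    rw [PiLp.inner_apply]
    refine Finset.sum_congr rfl fun i _ => ?_
    rw [RCLike.inner_apply, conj_trivial, hu s i, mul_comm]
  set c : (Fin d → Bool) → ℝ := fun s => ⟪G, u s⟫ with hc
  -- pointwise bound
  have pointwise : ∀ s, ‖g s‖ ^ 2 ≤ 2 * d * (c s)^2 + μ ^ 2 * L ^ 2 * (d:ℝ) ^ 3 / 2 := by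
    intro s
    have hdesc := descent f L hf hL x (μ • u s)
    have hsm : (⟪G, μ • u s⟫ : ℝ) = μ * c s := real_inner_smul_right _ _ _
    have hnsm : ‖μ • u s‖ ^ 2 = μ ^ 2 * d := by
      rw [norm_smul, mul_pow, Real.norm_eq_abs, sq_abs, hunorm s]
    rw [hsm, hnsm] at hdesc
    set Δ : ℝ := f (x + μ • u s) - f x with hΔ
    clear_value Δ
    have habs := abs_le.mp hdesc
    have hsq : Δ ^ 2 ≤ 2 * (μ * c s)^2 + 2 * (L / 2 * (μ^2 * d))^2 := by
      have he2 : (Δ - μ * c s)^2 ≤ (L / 2 * (μ^2 * d))^2 := sq_le_sq' habs.1 habs.2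
      nlinarith [he2, sq_nonneg (Δ - 2 * (μ * c s))]
    have hgs : ‖g s‖ ^ 2 = μ⁻¹ ^ 2 * Δ ^ 2 * d := by
      rw [hg s, norm_smul, mul_pow, Real.norm_eq_abs, sq_abs, hunorm s, mul_pow, ← hΔ]
    rw [hgs]
    have hμ2 : (0:ℝ) < μ ^ 2 := by positivity
    have hdn : (0:ℝ) ≤ (d:ℝ) := Nat.cast_nonneg d
    calc μ⁻¹ ^ 2 * Δ ^ 2 * d ≤ μ⁻¹ ^ 2 * (2 * (μ * c s)^2 + 2 * (L / 2 * (μ^2 * d))^2) * d := by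
          apply mul_le_mul_of_nonneg_right _ hdn
          exact mul_le_mul_of_nonneg_left hsq (by positivity)
      _ = 2 * d * (c s)^2 + μ ^ 2 * L ^ 2 * (d:ℝ) ^ 3 / 2 := by
          field_simp
  -- sum it up
  have hsumc : ∑ s : Fin d → Bool, (c s)^2 = 2^d * ‖G‖^2 := by
    have : ∀ s : Fin d → Bool, (c s)^2 = (∑ i, G i * (if s i then (1:ℝ) else -1))^2 := by
      intro s; rw [hc]; simp only []; rw [hinner s]
    rw [Finset.sum_congr rfl (fun s _ => this s), sum_inner_sq d (fun i => G i)]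
    congr 1
    rw [← real_inner_self_eq_norm_sq, PiLp.inner_apply]
    exact Finset.sum_congr rfl fun i _ => by rw [RCLike.inner_apply, conj_trivial, sq]
  have hsum : ∑ s : Fin d → Bool, ‖g s‖ ^ 2
      ≤ 2^d * (2 * d * ‖G‖^2 + μ ^ 2 * L ^ 2 * (d:ℝ) ^ 3 / 2) := by
    calc ∑ s : Fin d → Bool, ‖g s‖ ^ 2
        ≤ ∑ s : Fin d → Bool, (2 * d * (c s)^2 + μ ^ 2 * L ^ 2 * (d:ℝ) ^ 3 / 2) :=
          Finset.sum_le_sum fun s _ => pointwise s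
      _ = 2 * d * (∑ s : Fin d → Bool, (c s)^2) + 2^d * (μ ^ 2 * L ^ 2 * (d:ℝ) ^ 3 / 2) := by
          rw [Finset.sum_add_distrib, ← Finset.mul_sum, Finset.sum_const, Finset.card_univ]
          simp [Fintype.card_fun]
      _ = 2^d * (2 * d * ‖G‖^2 + μ ^ 2 * L ^ 2 * (d:ℝ) ^ 3 / 2) := by
          rw [hsumc]; ring
  have h2d : (0:ℝ) < (2:ℝ)^d := by positivity
  calc ((2 : ℝ) ^ d)⁻¹ * (∑ s : Fin d → Bool, ‖g s‖ ^ 2)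
      ≤ ((2 : ℝ) ^ d)⁻¹ * (2^d * (2 * d * ‖G‖^2 + μ ^ 2 * L ^ 2 * (d:ℝ) ^ 3 / 2)) :=
        mul_le_mul_of_nonneg_left hsum (by positivity)
    _ = 2 * d * ‖G‖^2 + μ ^ 2 * L ^ 2 * (d:ℝ) ^ 3 / 2 := by
        rw [inv_mul_cancel_left₀ (ne_of_gt h2d)]
end
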